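/- Let R be a commutative ring. Let Υ : Seg_w → R[x_1,…,x_n] be such that every Υ(b) is supported in tar' and X^{b*}·Υ(b) = X^{b}·Υ(b*) for every b ∈ Seg_w. Let Υ̂ : Seg_w ∪ S_D → R[x_1,…,x_n] agree with Υ on Seg_w and satisfy Υ̂(m′ + b) = trunc_s(X^{m′}·Υ(b)) whenever b ∈ Seg_w and m′ is a (δ+1)-monomial with 1 ≤ deg m′ ≤ s−r. Set X₀ = 1 and e₀ = 0. Then for all b₁, b₂ ∈ Seg_w ∪ S_D and all α, β ∈ {0} ∪ {δ+1, …, n} with at most one of α, β equal to 0, if e_α + b₁ = e_β + b₂ then X_α·Υ̂(b₁) − X_β·Υ̂(b₂) lies in the R-span of the monomials X^m with m ∈ ∂O and deg m = s+1; moreover, if both α ≥ δ+1 and β ≥ δ+1 then X_α·Υ̂(b₁) = X_β·Υ̂(b₂). -/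

import Mathlib

open MvPolynomial
open scoped Classical

noncomputable section

/-- Total degree of an exponent vector `m : Fin n →₀ ℕ`. -/
def mdeg {n : ℕ} (m : Fin n →₀ ℕ) : ℕ := ∑ k, m k

/-- `m` is a δ-monomial: all exponents of variables strictly before `δ` vanish. -/
def IsDeltaMon {n : ℕ} (δ : Fin n) (m : Fin n →₀ ℕ) : Prop := ∀ k < δ, m k = 0

/-- `m` is a (δ+1)-monomial: all exponents of variables up to and including `δ` vanish. -/
def IsSuccDeltaMon {n : ℕ} (δ : Fin n) (m : Fin n →₀ ℕ) : Prop := ∀ k ≤ δ, m k = 0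

/-- The order ideal `O(n,r,s,δ,w)`. -/
def OIdeal {n : ℕ} (r s w : ℕ) (δ : Fin n) : Set (Fin n →₀ ℕ) :=
  {m | mdeg m < r ∨ (IsDeltaMon δ m ∧ r ≤ mdeg m ∧ mdeg m ≤ s ∧ m δ + w + 1 ≤ r)}

/-- The border `∂O`. -/
def Border {n : ℕ} (r s w : ℕ) (δ : Fin n) : Set (Fin n →₀ ℕ) :=
  {m | m ∉ OIdeal r s w δ ∧
    ∃ (α : Fin n) (t : Fin n →₀ ℕ), t ∈ OIdeal r s w δ ∧ m = Finsupp.single α 1 + t}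

/-- The set `S_D` of "diagonal" border monomials. -/
def SD {n : ℕ} (r s w : ℕ) (δ : Fin n) : Set (Fin n →₀ ℕ) :=
  {m | m ∈ Border r s w δ ∧ IsDeltaMon δ m ∧ r + 1 ≤ mdeg m ∧ mdeg m ≤ s}

/-- The set `S_L` of "leading" monomials. -/
def SL {n : ℕ} (r w : ℕ) (δ : Fin n) : Set (Fin n →₀ ℕ) :=
  {m | IsDeltaMon δ m ∧ mdeg m = r ∧ r - w ≤ m δ}

/-- `tar = {m ∈ O : r ≤ deg m ≤ s}`. -/
def Tar {n : ℕ} (r s w : ℕ) (δ : Fin n) : Set (Fin n →₀ ℕ) :=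
  {m | m ∈ OIdeal r s w δ ∧ r ≤ mdeg m ∧ mdeg m ≤ s}

/-- `tar' = {m ∈ tar : deg m ≤ s−1}`. -/
def Tar' {n : ℕ} (r s w : ℕ) (δ : Fin n) : Set (Fin n →₀ ℕ) :=
  {m | m ∈ Tar r s w δ ∧ mdeg m ≤ s - 1}

/-- `tar'' = {m ∈ tar' : m_{δ+1} ≥ w}` (`δ'` is the index of `x_{δ+1}`). -/
def Tar'' {n : ℕ} (r s w : ℕ) (δ δ' : Fin n) : Set (Fin n →₀ ℕ) :=
  {m | m ∈ Tar' r s w δ ∧ w ≤ m δ'}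

/-- `trailmon = {m ∈ O : deg m = s}`. -/
def Trail {n : ℕ} (r s w : ℕ) (δ : Fin n) : Set (Fin n →₀ ℕ) :=
  {m | m ∈ OIdeal r s w δ ∧ mdeg m = s}

/-- `leadmon = {m : deg m = r, m ∉ O}`. -/
def Lead {n : ℕ} (r s w : ℕ) (δ : Fin n) : Set (Fin n →₀ ℕ) :=
  {m | mdeg m = r ∧ m ∉ OIdeal r s w δ}

/-- `Seg_a`: δ-monomials of degree `r` with `x_δ`-exponent `r − a`. -/
def SegA {n : ℕ} (r a : ℕ) (δ : Fin n) : Set (Fin n →₀ ℕ) :=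
  {b | IsDeltaMon δ b ∧ mdeg b = r ∧ b δ = r - a}

/-- The monomial `x_δ^{r−a}·x_{δ+1}^{a}` (`δ'` is the index of `x_{δ+1}`). -/
def bstar {n : ℕ} (r a : ℕ) (δ δ' : Fin n) : Fin n →₀ ℕ :=
  Finsupp.single δ (r - a) + Finsupp.single δ' a

/-- Truncation: sum of homogeneous components of degree `0` through `s`. -/
def truncLE {n : ℕ} {R : Type*} [CommRing R] (s : ℕ) (P : MvPolynomial (Fin n) R) :
    MvPolynomial (Fin n) R :=
  ∑ m ∈ P.support.filter (fun m => mdeg m ≤ s), monomial m (coeff m P)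

/-- `optX R none = 1 = X₀`, `optX R (some a) = X a`. -/
def optX {n : ℕ} (R : Type*) [CommRing R] : Option (Fin n) → MvPolynomial (Fin n) R
  | none => 1
  | some a => X a

/-- `optE none = 0 = e₀`, `optE (some a) = e_a`. -/
def optE {n : ℕ} : Option (Fin n) → (Fin n →₀ ℕ)
  | none => 0
  | some a => Finsupp.single a 1

/-- The reduction operator determined by a target function `UpsD` on `S_D`. -/
def redFn {n : ℕ} {R : Type*} [CommRing R] (r s w : ℕ) (δ : Fin n)
    (UpsD : (Fin n →₀ ℕ) → MvPolynomial (Fin n) R) (P : MvPolynomial (Fin n) R) :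
    MvPolynomial (Fin n) R :=
  (∑ m ∈ P.support.filter (fun m => m ∈ Tar r s w δ), monomial m (coeff m P)) -
  ∑ m ∈ P.support.filter (fun m => m ∈ SD r s w δ), coeff m P • UpsD m

/-- The polynomial ring over `K` in the distinguished indeterminates `C_{(t,b)}`
and the modification indeterminates `θ_m`. -/
abbrev BigA (K : Type*) [Field K] {n : ℕ} (r s w : ℕ) (δ δ' : Fin n) : Type _ :=
  MvPolynomial ((↥(Trail r s w δ) × ↥(Lead r s w δ)) ⊕ ↥(Tar'' r s w δ δ')) K

/-- The generic linear combination `N_b = Σ_t C_{(t,b)}·X^t` for `b ∈ leadmon`, `0` otherwise. -/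
def NB (K : Type*) [Field K] {n : ℕ} (r s w : ℕ) (δ δ' : Fin n) (b : Fin n →₀ ℕ) :
    MvPolynomial (Fin n) (BigA K r s w δ δ') :=
  if hb : b ∈ Lead r s w δ then
    ∑ᶠ t : ↥(Trail r s w δ),
      monomial (t : Fin n →₀ ℕ)
        (MvPolynomial.X (Sum.inl (t, ⟨b, hb⟩)) : BigA K r s w δ δ')
  else 0

namespace Stmt9Aux

variable {n : ℕ} {R : Type*} [CommRing R]

lemma mdeg_add (a b : Fin n →₀ ℕ) : mdeg (a + b) = mdeg a + mdeg b := by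
  simp [mdeg, Finsupp.add_apply, Finset.sum_add_distrib]

lemma mdeg_zero : mdeg (0 : Fin n →₀ ℕ) = 0 := by simp [mdeg]

lemma mdeg_single (k : Fin n) (v : ℕ) : mdeg (Finsupp.single k v) = v := by
  simp [mdeg, Finsupp.single_apply]

lemma mdeg_eq_zero {m : Fin n →₀ ℕ} (h : mdeg m = 0) : m = 0 := by
  ext k
  have := Finset.sum_eq_zero_iff.mp h k (Finset.mem_univ k)
  simpa using this

lemma coeff_truncLE (s : ℕ) (P : MvPolynomial (Fin n) R) (m : Fin n →₀ ℕ) :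
    coeff m (truncLE s P) = if mdeg m ≤ s then coeff m P else 0 := by
  classical
  rw [truncLE, coeff_sum]
  simp only [coeff_monomial]
  rw [Finset.sum_ite_eq' (P.support.filter (fun m => mdeg m ≤ s)) m (fun k => coeff k P)]
  by_cases h1 : mdeg m ≤ s <;> by_cases h2 : m ∈ P.support <;>
    simp_all [Finset.mem_filter, MvPolynomial.mem_support_iff, MvPolynomial.notMem_support_iff]

lemma truncLE_eq_self {s : ℕ} {P : MvPolynomial (Fin n) R}
    (h : ∀ m ∈ P.support, mdeg m ≤ s) : truncLE s P = P := by
  ext m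
  rw [coeff_truncLE]
  split_ifs with h'
  · rfl
  · by_contra hc
    exact h' (h m (MvPolynomial.mem_support_iff.mpr (fun h0 => hc h0.symm)))

lemma monomial_mul_truncLE (e : Fin n →₀ ℕ) (s : ℕ) (P : MvPolynomial (Fin n) R) :
    monomial e (1 : R) * truncLE s P = truncLE (s + mdeg e) (monomial e (1 : R) * P) := by
  ext m
  simp only [coeff_monomial_mul', coeff_truncLE, one_mul]
  by_cases he : e ≤ m
  · have hsum : mdeg (m - e) + mdeg e = mdeg m := by
      rw [← mdeg_add, tsub_add_cancel_of_le he]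
    simp only [he, if_true]
    split_ifs <;> first | rfl | omega
  · simp [he]

lemma monomial_mul_cancel {e : Fin n →₀ ℕ} {P Q : MvPolynomial (Fin n) R}
    (h : monomial e (1 : R) * P = monomial e (1 : R) * Q) : P = Q := by
  ext m
  have := congrArg (coeff (e + m)) h
  simpa using this

lemma exists_sub (w : ℕ) : ∀ (u : Fin n →₀ ℕ), w ≤ mdeg u →
    ∃ g : Fin n →₀ ℕ, g ≤ u ∧ mdeg g = w := by
  induction w with
  | zero => exact fun u _ => ⟨0, zero_le, mdeg_zero⟩
  | succ w ih =>
    intro u hu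
    have hne : ∃ k, u k ≠ 0 := by
      by_contra h
      push_neg at h
      have : u = 0 := Finsupp.ext h
      rw [this, mdeg_zero] at hu
      omega
    obtain ⟨k, hk⟩ := hne
    have hle : Finsupp.single k 1 ≤ u := by
      rw [Finsupp.single_le_iff]; omega
    have hm : mdeg (u - Finsupp.single k 1) + 1 = mdeg u := by
      have h2 := mdeg_add (u - Finsupp.single k 1) (Finsupp.single k 1)
      rw [tsub_add_cancel_of_le hle, mdeg_single] at h2
      omega
    obtain ⟨g, hg, hgd⟩ := ih (u - Finsupp.single k 1) (by omega)
    refine ⟨g + Finsupp.single k 1, ?_, by rw [mdeg_add, hgd, mdeg_single]⟩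
    rw [Finsupp.le_def] at hg ⊢
    intro j
    have h1 := hg j
    simp only [Finsupp.tsub_apply, Finsupp.add_apply, Finsupp.single_apply] at h1 ⊢
    split_ifs at h1 ⊢ with hj
    · subst hj; omega
    · omega

lemma mem_border_key {r s w : ℕ} {δ : Fin n} (hr : 2 ≤ r) (hrs : r < s) (hw : w + 1 ≤ r)
    {M t : Fin n →₀ ℕ} (hM : IsSuccDeltaMon δ M) (ht : t ∈ Tar' r s w δ)
    (hdeg : mdeg (M + t) = s + 1) : M + t ∈ Border r s w δ := by
  obtain ⟨⟨htO, htr, hts⟩, hts'⟩ := ht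
  have htO' : IsDeltaMon δ t ∧ r ≤ mdeg t ∧ mdeg t ≤ s ∧ t δ + w + 1 ≤ r := by
    rcases htO with h | h
    · omega
    · exact h
  have hdegM : mdeg M + mdeg t = s + 1 := by rw [← mdeg_add]; exact hdeg
  have hM2 : 2 ≤ mdeg M := by omega
  have hMne : ∃ γ, M γ ≠ 0 := by
    by_contra h
    push_neg at h
    have : M = 0 := Finsupp.ext h
    rw [this, mdeg_zero] at hM2
    omega
  obtain ⟨γ, hγ⟩ := hMne
  have hγδ : δ < γ := by
    by_contra h
    exact hγ (hM γ (not_lt.mp h))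
  have hsle : Finsupp.single γ 1 ≤ M := by rw [Finsupp.single_le_iff]; omega
  refine ⟨?_, γ, (M - Finsupp.single γ 1) + t, ?_, ?_⟩
  · intro hmem
    rcases hmem with h | h
    · omega
    · omega
  · -- u ∈ O
    have hudeg : mdeg ((M - Finsupp.single γ 1) + t) + 1 = s + 1 := by
      have h2 := mdeg_add (M - Finsupp.single γ 1) (Finsupp.single γ 1)
      rw [tsub_add_cancel_of_le hsle, mdeg_single] at h2
      rw [mdeg_add]
      omega
    refine Or.inr ⟨?_, by omega, by omega, ?_⟩
    · intro k hk
      rw [Finsupp.add_apply, Finsupp.tsub_apply, hM k (le_of_lt hk), htO'.1 k hk,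
        Finsupp.single_apply]
      simp
    · have h1 : (((M - Finsupp.single γ 1) + t : Fin n →₀ ℕ)) δ = t δ := by
        have hne : γ ≠ δ := ne_of_gt hγδ
        rw [Finsupp.add_apply, Finsupp.tsub_apply, hM δ le_rfl]
        simp [Finsupp.single_apply, hne]
      omega
  · rw [← add_assoc, add_tsub_cancel_of_le hsle]

lemma diff_in_span {r s w : ℕ} {δ : Fin n} (hr : 2 ≤ r) (hrs : r < s) (hw : w + 1 ≤ r)
    {A : Fin n →₀ ℕ} (hA : IsSuccDeltaMon δ A) {G : MvPolynomial (Fin n) R}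
    (hG : ((G.support : Set (Fin n →₀ ℕ))) ⊆ Tar' r s w δ) :
    truncLE (s + 1) (monomial A (1 : R) * G) - truncLE s (monomial A (1 : R) * G) ∈
      Submodule.span R ((fun m => (monomial m (1 : R) : MvPolynomial (Fin n) R)) ''
        {m | m ∈ Border r s w δ ∧ mdeg m = s + 1}) := by
  classical
  set C := monomial A (1 : R) * G with hC
  have hsplit : C.support.filter (fun m => mdeg m ≤ s + 1) =
      C.support.filter (fun m => mdeg m ≤ s) ∪ C.support.filter (fun m => mdeg m = s + 1) := by
    ext m
    simp only [Finset.mem_filter, Finset.mem_union]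
    constructor
    · rintro ⟨h1, h2⟩
      rcases Nat.lt_or_ge (mdeg m) (s + 1) with h | h
      · exact Or.inl ⟨h1, by omega⟩
      · exact Or.inr ⟨h1, by omega⟩
    · rintro (⟨h1, h2⟩ | ⟨h1, h2⟩) <;> exact ⟨h1, by omega⟩
  have hdisj : Disjoint (C.support.filter (fun m => mdeg m ≤ s))
      (C.support.filter (fun m => mdeg m = s + 1)) := by
    rw [Finset.disjoint_left]
    intro m h1 h2
    rw [Finset.mem_filter] at h1 h2
    omega
  have heq : truncLE (s + 1) C - truncLE s C =
      ∑ m ∈ C.support.filter (fun m => mdeg m = s + 1), monomial m (coeff m C) := by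
    rw [truncLE, truncLE, hsplit, Finset.sum_union hdisj, add_sub_cancel_left]
  rw [heq]
  refine Submodule.sum_mem _ (fun m hm => ?_)
  rw [Finset.mem_filter] at hm
  obtain ⟨hms, hmd⟩ := hm
  have hcoeff : coeff m C ≠ 0 := MvPolynomial.mem_support_iff.mp hms
  rw [hC, coeff_monomial_mul'] at hcoeff
  have hAm : A ≤ m := by
    by_contra h
    simp [h] at hcoeff
  have ht : m - A ∈ G.support := by
    rw [MvPolynomial.mem_support_iff]
    intro h
    rw [if_pos hAm, h, mul_zero] at hcoeff
    exact hcoeff rfl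
  have htT : m - A ∈ Tar' r s w δ := hG ht
  have hmeq : A + (m - A) = m := add_tsub_cancel_of_le hAm
  have hmB : m ∈ Border r s w δ := by
    rw [← hmeq]
    exact mem_border_key hr hrs hw hA htT (by rw [hmeq]; exact hmd)
  have : (monomial m (coeff m C) : MvPolynomial (Fin n) R) =
      coeff m C • monomial m (1 : R) := by
    rw [smul_monomial, smul_eq_mul, mul_one]
  rw [this]
  exact Submodule.smul_mem _ _ (Submodule.subset_span ⟨m, ⟨hmB, hmd⟩, rfl⟩)

lemma bstar_mem {r w : ℕ} {δ : Fin n} (hδ : (δ : ℕ) + 1 < n) (hw : w + 1 ≤ r) :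
    bstar r w δ ⟨(δ : ℕ) + 1, hδ⟩ ∈ SegA r w δ := by
  have hne : (⟨(δ : ℕ) + 1, hδ⟩ : Fin n) ≠ δ := by
    intro h
    have := congrArg Fin.val h
    simp at this
  refine ⟨?_, ?_, ?_⟩
  · intro k hk
    have hne2 : (⟨(δ : ℕ) + 1, hδ⟩ : Fin n) ≠ k := by
      intro h
      have h2 : (δ : ℕ) + 1 = (k : ℕ) := congrArg Fin.val h
      have h3 : (k : ℕ) < (δ : ℕ) := Fin.lt_def.mp hk
      omega
    rw [bstar, Finsupp.add_apply, Finsupp.single_apply, Finsupp.single_apply,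
      if_neg (ne_of_gt hk), if_neg hne2]
    omega
  · rw [bstar, mdeg_add, mdeg_single, mdeg_single]; omega
  · rw [bstar, Finsupp.add_apply, Finsupp.single_apply, Finsupp.single_apply,
      if_pos rfl, if_neg hne]
    omega

lemma cross {r w : ℕ} {δ : Fin n} (hδ : (δ : ℕ) + 1 < n)
    {Ups : (Fin n →₀ ℕ) → MvPolynomial (Fin n) R}
    (hcomp : ∀ b ∈ SegA r w δ,
      monomial (bstar r w δ ⟨(δ : ℕ) + 1, hδ⟩) (1 : R) * Ups b =
        monomial b (1 : R) * Ups (bstar r w δ ⟨(δ : ℕ) + 1, hδ⟩)) :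
    ∀ c₁ ∈ SegA r w δ, ∀ c₂ ∈ SegA r w δ,
      monomial c₂ (1 : R) * Ups c₁ = monomial c₁ (1 : R) * Ups c₂ := by
  intro c₁ h₁ c₂ h₂
  set B := bstar r w δ ⟨(δ : ℕ) + 1, hδ⟩ with hB
  apply monomial_mul_cancel (e := B)
  calc monomial B (1:R) * (monomial c₂ 1 * Ups c₁)
      = monomial c₂ 1 * (monomial B 1 * Ups c₁) := by ring
    _ = monomial c₂ 1 * (monomial c₁ 1 * Ups B) := by rw [hcomp c₁ h₁]
    _ = monomial c₁ 1 * (monomial c₂ 1 * Ups B) := by ring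
    _ = monomial c₁ 1 * (monomial B 1 * Ups c₂) := by rw [← hcomp c₂ h₂]
    _ = monomial B 1 * (monomial c₁ 1 * Ups c₂) := by ring

lemma decomp {r s w : ℕ} {δ : Fin n}
    (hr : 2 ≤ r) (hrs : r < s) (hw : w + 1 ≤ r)
    {Ups UpsHat : (Fin n →₀ ℕ) → MvPolynomial (Fin n) R}
    (hsupp : ∀ b ∈ SegA r w δ, ((Ups b).support : Set (Fin n →₀ ℕ)) ⊆ Tar' r s w δ)
    (hagree : ∀ b ∈ SegA r w δ, UpsHat b = Ups b)
    (hdef : ∀ b ∈ SegA r w δ, ∀ m' : Fin n →₀ ℕ, IsSuccDeltaMon δ m' →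
      1 ≤ mdeg m' → mdeg m' ≤ s - r →
      UpsHat (m' + b) = truncLE s (monomial m' (1 : R) * Ups b))
    {b : Fin n →₀ ℕ} (hb : b ∈ SegA r w δ ∪ SD r s w δ) :
    ∃ c m', c ∈ SegA r w δ ∧ IsSuccDeltaMon δ m' ∧ b = m' + c ∧
      UpsHat b = truncLE s (monomial m' (1 : R) * Ups c) := by
  rcases hb with hb | hb
  · refine ⟨b, 0, hb, fun k _ => rfl, (zero_add b).symm, ?_⟩
    rw [hagree b hb]
    have h1 : (monomial (0 : Fin n →₀ ℕ) (1 : R)) = 1 := by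
      simp [MvPolynomial.monomial_zero']
    rw [h1, one_mul]
    refine (truncLE_eq_self (fun m hm => ?_)).symm
    have h2 := hsupp b hb (Finset.mem_coe.mpr hm)
    have h3 : mdeg m ≤ s - 1 := h2.2
    omega
  · obtain ⟨⟨hnotO, αb, t, htO, hbt⟩, hbmon, hbr, hbs⟩ := hb
    have hbδ_ge : r ≤ b δ + w := by
      by_contra h
      push_neg at h
      exact hnotO (Or.inr ⟨hbmon, by omega, hbs, by omega⟩)
    have hdegt : 1 + mdeg t = mdeg b := by rw [hbt, mdeg_add, mdeg_single]
    have htO' : IsDeltaMon δ t ∧ r ≤ mdeg t ∧ mdeg t ≤ s ∧ t δ + w + 1 ≤ r := by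
      rcases htO with h | h
      · omega
      · exact h
    have hbδ_le : b δ + w ≤ r := by
      have hbδ : b δ = (Finsupp.single αb 1) δ + t δ := by rw [hbt, Finsupp.add_apply]
      rw [Finsupp.single_apply] at hbδ
      have h4 := htO'.2.2.2
      split_ifs at hbδ <;> omega
    have hbδeq : b δ = r - w := by omega
    have hsle : Finsupp.single δ (r - w) ≤ b := by rw [Finsupp.single_le_iff]; omega
    set u := b - Finsupp.single δ (r - w) with hu
    have husum : mdeg u + (r - w) = mdeg b := by
      have h2 := mdeg_add u (Finsupp.single δ (r - w))
      rw [tsub_add_cancel_of_le hsle, mdeg_single] at h2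
      omega
    have humon : IsSuccDeltaMon δ u := by
      intro k hk
      rw [hu, Finsupp.tsub_apply, Finsupp.single_apply]
      rcases lt_or_eq_of_le hk with h | h
      · rw [hbmon k h, if_neg (ne_of_gt h)]
        omega
      · subst h
        rw [if_pos rfl]
        omega
    have huw : w ≤ mdeg u := by omega
    obtain ⟨g, hg, hgd⟩ := exists_sub w u huw
    set c := Finsupp.single δ (r - w) + g with hc
    have hgk : ∀ k, k ≤ δ → g k = 0 := by
      intro k hk
      have h1 := (Finsupp.le_def.mp hg) k
      rw [humon k hk] at h1
      omega
    have hcSeg : c ∈ SegA r w δ := by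
      refine ⟨?_, ?_, ?_⟩
      · intro k hk
        rw [hc, Finsupp.add_apply, Finsupp.single_apply, hgk k (le_of_lt hk),
          if_neg (ne_of_gt hk)]
      · rw [hc, mdeg_add, mdeg_single, hgd]; omega
      · rw [hc, Finsupp.add_apply, Finsupp.single_apply, if_pos rfl, hgk δ le_rfl]
        omega
    set m' := b - c with hm'
    have hcb : c ≤ b := by
      rw [Finsupp.le_def]
      intro k
      by_cases hdk : δ = k
      · subst hdk
        have h1 := Finsupp.le_def.mp hg δ
        have h2 : u δ = b δ - (r - w) := by
          rw [hu, Finsupp.tsub_apply, Finsupp.single_apply, if_pos rfl]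
        rw [hc, Finsupp.add_apply, Finsupp.single_apply, if_pos rfl]
        omega
      · have h1 := Finsupp.le_def.mp hg k
        have h2 : u k = b k := by
          rw [hu, Finsupp.tsub_apply, Finsupp.single_apply, if_neg hdk]
          omega
        rw [hc, Finsupp.add_apply, Finsupp.single_apply, if_neg hdk]
        omega
    have hbeq : b = m' + c := by
      rw [hm']
      ext k
      have h1 := Finsupp.le_def.mp hcb k
      simp only [Finsupp.add_apply, Finsupp.tsub_apply]
      omega
    have hm'mon : IsSuccDeltaMon δ m' := by
      intro k hk
      rw [hm', Finsupp.tsub_apply]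
      rcases lt_or_eq_of_le hk with h | h
      · rw [hbmon k h]
        omega
      · subst h
        rw [hcSeg.2.2]
        omega
    have hm'deg : 1 ≤ mdeg m' ∧ mdeg m' ≤ s - r := by
      have h2 : mdeg m' + mdeg c = mdeg b := by rw [← mdeg_add, ← hbeq]
      have h3 : mdeg c = r := hcSeg.2.1
      omega
    refine ⟨c, m', hcSeg, hm'mon, hbeq, ?_⟩
    rw [hbeq]
    exact hdef c hcSeg m' hm'mon hm'deg.1 hm'deg.2

end Stmt9Aux

/-- compatibility of the Step-2 target function on `Seg_w ∪ S_D`. -/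
theorem statement9 (R : Type*) [CommRing R] (n r s w : ℕ) (δ : Fin n)
    (hn : 2 ≤ n) (hr : 2 ≤ r) (hrs : r < s) (hδ : (δ : ℕ) + 1 < n) (hw : w + 1 ≤ r)
    (Ups UpsHat : (Fin n →₀ ℕ) → MvPolynomial (Fin n) R)
    (hsupp : ∀ b ∈ SegA r w δ, ((Ups b).support : Set (Fin n →₀ ℕ)) ⊆ Tar' r s w δ)
    (hcomp : ∀ b ∈ SegA r w δ,
      monomial (bstar r w δ ⟨(δ : ℕ) + 1, hδ⟩) (1 : R) * Ups b =
        monomial b (1 : R) * Ups (bstar r w δ ⟨(δ : ℕ) + 1, hδ⟩))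
    (hagree : ∀ b ∈ SegA r w δ, UpsHat b = Ups b)
    (hdef : ∀ b ∈ SegA r w δ, ∀ m' : Fin n →₀ ℕ, IsSuccDeltaMon δ m' →
      1 ≤ mdeg m' → mdeg m' ≤ s - r →
      UpsHat (m' + b) = truncLE s (monomial m' (1 : R) * Ups b)) :
    ∀ b₁ ∈ SegA r w δ ∪ SD r s w δ, ∀ b₂ ∈ SegA r w δ ∪ SD r s w δ,
      ∀ α β : Option (Fin n),
        (∀ a, α = some a → δ < a) → (∀ a, β = some a → δ < a) →
        ¬(α = none ∧ β = none) →
        optE α + b₁ = optE β + b₂ →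
        (optX R α * UpsHat b₁ - optX R β * UpsHat b₂ ∈
          Submodule.span R ((fun m => (monomial m (1 : R) : MvPolynomial (Fin n) R)) ''
            {m | m ∈ Border r s w δ ∧ mdeg m = s + 1})) ∧
        ((α ≠ none ∧ β ≠ none) → optX R α * UpsHat b₁ = optX R β * UpsHat b₂) := by
  classical
  intro b₁ hb₁ b₂ hb₂ α β hα hβ hnn heq
  obtain ⟨c₁, m₁, hc₁, hm₁, hb₁eq, hU₁⟩ := Stmt9Aux.decomp hr hrs hw hsupp hagree hdef hb₁
  obtain ⟨c₂, m₂, hc₂, hm₂, hb₂eq, hU₂⟩ := Stmt9Aux.decomp hr hrs hw hsupp hagree hdef hb₂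
  have hcross := Stmt9Aux.cross hδ hcomp
  have heq' : (optE α + m₁) + c₁ = (optE β + m₂) + c₂ := by
    rw [hb₁eq, hb₂eq] at heq
    rw [add_assoc, add_assoc]
    exact heq
  have hkey : monomial (optE α + m₁) (1 : R) * Ups c₁ =
      monomial (optE β + m₂) (1 : R) * Ups c₂ := by
    apply Stmt9Aux.monomial_mul_cancel (e := c₂)
    calc monomial c₂ (1 : R) * (monomial (optE α + m₁) 1 * Ups c₁)
        = monomial (optE α + m₁) 1 * (monomial c₂ 1 * Ups c₁) := by ring
      _ = monomial (optE α + m₁) 1 * (monomial c₁ 1 * Ups c₂) := by rw [hcross c₁ hc₁ c₂ hc₂]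
      _ = monomial ((optE α + m₁) + c₁) 1 * Ups c₂ := by
          rw [← mul_assoc, monomial_mul, one_mul]
      _ = monomial ((optE β + m₂) + c₂) 1 * Ups c₂ := by rw [heq']
      _ = monomial c₂ 1 * (monomial (optE β + m₂) 1 * Ups c₂) := by
          rw [← mul_assoc, monomial_mul, one_mul, add_comm c₂ (optE β + m₂)]
  have hXopt : ∀ γ : Option (Fin n), optX R γ = monomial (optE γ) (1 : R) := by
    intro γ
    cases γ with
    | none => simp [optX, optE]
    | some a => simp [optX, optE, X]
  have hL : optX R α * UpsHat b₁ =
      truncLE (s + mdeg (optE α)) (monomial (optE α + m₁) (1 : R) * Ups c₁) := by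
    rw [hXopt, hU₁, Stmt9Aux.monomial_mul_truncLE, ← mul_assoc, monomial_mul, one_mul]
  have hR : optX R β * UpsHat b₂ =
      truncLE (s + mdeg (optE β)) (monomial (optE α + m₁) (1 : R) * Ups c₁) := by
    rw [hXopt, hU₂, Stmt9Aux.monomial_mul_truncLE, ← mul_assoc, monomial_mul, one_mul, ← hkey]
  have hA : IsSuccDeltaMon δ (optE α + m₁) := by
    intro k hk
    rw [Finsupp.add_apply, hm₁ k hk]
    cases α with
    | none => simp [optE]
    | some a =>
      have hδa := hα a rfl
      have hne : a ≠ k := ne_of_gt (lt_of_le_of_lt hk hδa)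
      simp [optE, Finsupp.single_apply, hne]
  have hspan := Stmt9Aux.diff_in_span (R := R) hr hrs hw hA (hsupp c₁ hc₁)
  have hmdnone : mdeg (optE (none : Option (Fin n))) = 0 := Stmt9Aux.mdeg_zero
  have hmdsome : ∀ a : Fin n, mdeg (optE (some a)) = 1 := fun a => Stmt9Aux.mdeg_single a 1
  constructor
  · rw [hL, hR]
    cases α with
    | none =>
      cases β with
      | none => exact absurd ⟨rfl, rfl⟩ hnn
      | some b' =>
        rw [hmdnone, hmdsome b', Nat.add_zero, ← neg_sub]
        exact Submodule.neg_mem _ hspan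
    | some a =>
      cases β with
      | none =>
        rw [hmdnone, hmdsome a, Nat.add_zero]
        exact hspan
      | some b' =>
        rw [hmdsome a, hmdsome b', sub_self]
        exact Submodule.zero_mem _
  · rintro ⟨hαn, hβn⟩
    cases α with
    | none => exact absurd rfl hαn
    | some a =>
      cases β with
      | none => exact absurd rfl hβn
      | some b' => rw [hL, hR, hmdsome a, hmdsome b']
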